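/- Let R be a Noetherian one-dimensional integral domain and I ⊆ R a nonzero ideal such that for every maximal ideal m containing I, the localization R_m is a discrete valuation ring. Then I admits a unique factorization I = ∏_{i=1}^{ℓ} m_i^{α_i} as a finite product of powers of pairwise distinct maximal ideals of R. -/

import Mathlib

open Ideal IsLocalRing

/-- In a DVR, powers of the maximal ideal are pairwise distinct. -/
lemma dvr_pow_maximalIdeal_injective {A : Type*} [CommRing A] [IsDomain A]
    [IsDiscreteValuationRing A] {a b : ℕ}
    (h : maximalIdeal A ^ a = maximalIdeal A ^ b) : a = b := by
  obtain ⟨ϖ, hϖ⟩ := IsDiscreteValuationRing.exists_irreducible A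
  have hspan : maximalIdeal A = Ideal.span {ϖ} :=
    (IsDiscreteValuationRing.irreducible_iff_uniformizer ϖ).mp hϖ
  rw [hspan, Ideal.span_singleton_pow, Ideal.span_singleton_pow,
    Ideal.span_singleton_eq_span_singleton] at h
  obtain ⟨u, hu⟩ := h
  refine IsDiscreteValuationRing.unit_mul_pow_congr_pow hϖ hϖ u 1 a b ?_
  rw [Units.val_one, one_mul, ← hu, mul_comm]

/-- A nonzero ideal in a DVR is a power of the maximal ideal, with positive
exponent if the ideal is proper. -/
lemma dvr_ideal_eq_pow_maximalIdeal {A : Type*} [CommRing A] [IsDomain A]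
    [IsDiscreteValuationRing A] {J : Ideal A} (hJ : J ≠ ⊥) :
    ∃ a : ℕ, J = maximalIdeal A ^ a := by
  obtain ⟨ϖ, hϖ⟩ := IsDiscreteValuationRing.exists_irreducible A
  obtain ⟨a, ha⟩ := IsDiscreteValuationRing.ideal_eq_span_pow_irreducible hJ hϖ
  exact ⟨a, by
    rw [(IsDiscreteValuationRing.irreducible_iff_uniformizer ϖ).mp hϖ,
      Ideal.span_singleton_pow, ha]⟩

lemma map_finsupp_prod_pow {R S : Type*} [CommRing R] [CommRing S] (φ : R →+* S)
    (f : Ideal R →₀ ℕ) :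
    Ideal.map φ (f.prod fun m a => m ^ a) =
      ∏ m ∈ f.support, (Ideal.map φ m) ^ f m := by
  rw [Finsupp.prod]
  calc Ideal.map φ (∏ a ∈ f.support, a ^ f a)
      = Ideal.mapHom φ (∏ a ∈ f.support, a ^ f a) := rfl
    _ = ∏ a ∈ f.support, Ideal.mapHom φ (a ^ f a) := map_prod _ _ _
    _ = ∏ m ∈ f.support, (Ideal.map φ m) ^ f m :=
        Finset.prod_congr rfl fun m _ => map_pow (Ideal.mapHom φ) m (f m)

/-- If an ideal is not contained in a maximal ideal `n`, its image in the
localization at `n` is the whole ring. -/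
lemma map_eq_top_of_not_le {R : Type*} [CommRing R] {I n : Ideal R}
    [n.IsPrime] (h : ¬ I ≤ n) :
    Ideal.map (algebraMap R (Localization.AtPrime n)) I = ⊤ := by
  obtain ⟨x, hxI, hxn⟩ := SetLike.not_le_iff_exists.mp h
  exact Ideal.eq_top_of_isUnit_mem _ (Ideal.mem_map_of_mem _ hxI)
    (IsLocalization.map_units _ (⟨x, hxn⟩ : n.primeCompl))

/-- Localizing a product of powers of maximal ideals at a maximal ideal `n`
yields the corresponding power of the maximal ideal of the localization. -/
lemma map_prod_eq_pow_maximalIdeal {R : Type*} [CommRing R]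
    (f : Ideal R →₀ ℕ) (hf : ∀ m ∈ f.support, (m : Ideal R).IsMaximal)
    (n : Ideal R) (hn : n.IsMaximal) :
    haveI := hn.isPrime
    Ideal.map (algebraMap R (Localization.AtPrime n)) (f.prod fun m a => m ^ a) =
      maximalIdeal (Localization.AtPrime n) ^ f n := by
  haveI := hn.isPrime
  rw [map_finsupp_prod_pow]
  rw [Finset.prod_eq_single n
    (fun m hm hmn => by
      have hmmax := hf m hm
      have : ¬ m ≤ n := fun hle => hmn (hmmax.eq_of_le hn.ne_top hle)
      rw [map_eq_top_of_not_le this, Ideal.one_eq_top.symm, one_pow])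
    (fun hns => by rw [Finsupp.notMem_support_iff.mp hns, pow_zero])]
  rw [Localization.AtPrime.map_eq_maximalIdeal]

/-- In a Noetherian one-dimensional domain, a nonzero ideal whose localization at every
maximal ideal containing it is a DVR factors uniquely as a finite product of powers of
pairwise distinct maximal ideals. -/
theorem unique_factorization_of_locally_dvr_ideal
    (R : Type*) [CommRing R] [IsDomain R] [IsNoetherianRing R] [Ring.DimensionLEOne R]
    (I : Ideal R) (hI : I ≠ ⊥)
    (hloc : ∀ (m : Ideal R) (hm : m.IsMaximal), I ≤ m →
      IsDiscreteValuationRing (@Localization.AtPrime R _ m hm.isPrime)) :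
    ∃! f : Ideal R →₀ ℕ,
      (∀ m ∈ f.support, (m : Ideal R).IsMaximal) ∧
        I = f.prod (fun m a => m ^ a) := by
  classical
  -- the set of maximal ideals containing I is finite
  have hminfin : I.minimalPrimes.Finite := by
    rw [Ideal.minimalPrimes_eq_comap]
    exact Set.Finite.image _ (minimalPrimes.finite_of_isNoetherianRing (R ⧸ I))
  have hfin : {m : Ideal R | m.IsMaximal ∧ I ≤ m}.Finite := by
    refine hminfin.subset fun m hm => ?_
    obtain ⟨hm1, hm2⟩ := hm
    refine ⟨⟨hm1.isPrime, hm2⟩, fun {p} hp hpm => ?_⟩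
    have hpbot : p ≠ ⊥ := fun h => hI (le_bot_iff.mp (h ▸ hp.2))
    exact ((hp.1.isMaximal hpbot).eq_of_le hm1.ne_top hpm).ge
  -- the nonzero-image property in each localization
  have hmapne : ∀ (n : Ideal R) (hn : n.IsMaximal),
      haveI := hn.isPrime
      Ideal.map (algebraMap R (Localization.AtPrime n)) I ≠ ⊥ := by
    intro n hn
    haveI := hn.isPrime
    obtain ⟨x, hxI, hx0⟩ := Submodule.exists_mem_ne_zero_of_ne_bot hI
    intro h
    have : algebraMap R (Localization.AtPrime n) x = 0 := by
      have := Ideal.mem_map_of_mem (algebraMap R (Localization.AtPrime n)) hxI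
      rwa [h, Ideal.mem_bot] at this
    exact hx0 <| IsLocalization.injective (M := n.primeCompl)
      (Localization.AtPrime n) n.primeCompl_le_nonZeroDivisors
      (by rwa [map_zero] : algebraMap R (Localization.AtPrime n) x =
        algebraMap R (Localization.AtPrime n) 0)
  -- choose exponents
  have key : ∀ m : Ideal R, ∃ a : ℕ, ∀ (hm : m.IsMaximal), I ≤ m →
      haveI := hm.isPrime
      a ≠ 0 ∧ Ideal.map (algebraMap R (Localization.AtPrime m)) I =
        maximalIdeal (Localization.AtPrime m) ^ a := by
    intro m
    by_cases hm : m.IsMaximal ∧ I ≤ m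
    · obtain ⟨hm, hIm⟩ := hm
      haveI := hm.isPrime
      haveI := hloc m hm hIm
      obtain ⟨a, ha⟩ := dvr_ideal_eq_pow_maximalIdeal (hmapne m hm)
      refine ⟨a, fun _ _ => ⟨?_, ha⟩⟩
      intro h0
      subst h0
      rw [pow_zero, Ideal.one_eq_top] at ha
      have hle : Ideal.map (algebraMap R (Localization.AtPrime m)) I ≤
          maximalIdeal (Localization.AtPrime m) := by
        rw [← Localization.AtPrime.map_eq_maximalIdeal]
        exact Ideal.map_mono hIm
      rw [ha] at hle
      exact (maximalIdeal.isMaximal _).ne_top (top_le_iff.mp hle)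
    · exact ⟨0, fun h1 h2 => absurd ⟨h1, h2⟩ hm⟩
  choose α hα using key
  -- define the finsupp
  set g : Ideal R → ℕ := fun m => if m.IsMaximal ∧ I ≤ m then α m else 0 with hg
  have hgsupp : ∀ m : Ideal R, g m ≠ 0 → m ∈ hfin.toFinset := by
    intro m hm
    rw [Set.Finite.mem_toFinset]
    by_contra h
    exact hm (if_neg h)
  set f : Ideal R →₀ ℕ := Finsupp.onFinset hfin.toFinset g hgsupp with hf
  have hfval : ∀ m, f m = g m := fun m => rfl
  have hfmax : ∀ m ∈ f.support, (m : Ideal R).IsMaximal := by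
    intro m hm
    have hne := Finsupp.mem_support_iff.mp hm
    rw [hfval] at hne
    by_contra h
    exact hne (if_neg fun h' => h h'.1)
  -- the local exponent of any valid factorization is determined
  have hdet : ∀ f' : Ideal R →₀ ℕ,
      (∀ m ∈ f'.support, (m : Ideal R).IsMaximal) →
      I = f'.prod (fun m a => m ^ a) →
      ∀ (n : Ideal R) (hn : n.IsMaximal),
        haveI := hn.isPrime
        Ideal.map (algebraMap R (Localization.AtPrime n)) I =
          maximalIdeal (Localization.AtPrime n) ^ f' n ∧ (¬ I ≤ n → f' n = 0) := by
    intro f' hf'max hf'prod n hn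
    haveI := hn.isPrime
    constructor
    · rw [hf'prod]
      exact map_prod_eq_pow_maximalIdeal f' hf'max n hn
    · intro hIn
      by_contra h0
      have hns : n ∈ f'.support := Finsupp.mem_support_iff.mpr h0
      have : I ≤ n := by
        rw [hf'prod, ← Finsupp.mul_prod_erase f' n _ hns]
        exact le_trans Ideal.mul_le_left (Ideal.pow_le_self h0)
      exact hIn this
  -- f satisfies the conditions
  have hfprod : I = f.prod (fun m a => m ^ a) := by
    refine Ideal.eq_of_localization_maximal fun n hn => ?_
    haveI := hn.isPrime
    rw [map_prod_eq_pow_maximalIdeal f hfmax n hn]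
    by_cases hIn : I ≤ n
    · have hv : f n = α n := by rw [hfval]; exact if_pos ⟨hn, hIn⟩
      rw [hv]
      exact ((hα n hn hIn).2)
    · have hv : f n = 0 := by rw [hfval]; exact if_neg (fun h => hIn h.2)
      rw [hv, pow_zero, Ideal.one_eq_top]
      exact map_eq_top_of_not_le hIn
  refine ⟨f, ⟨hfmax, hfprod⟩, ?_⟩
  -- uniqueness
  rintro f' ⟨hf'max, hf'prod⟩
  ext n
  by_cases hn : n.IsMaximal
  · haveI := hn.isPrime
    by_cases hIn : I ≤ n
    · haveI := hloc n hn hIn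
      have h1 := (hdet f' hf'max hf'prod n hn).1
      have h2 := (hdet f hfmax hfprod n hn).1
      exact dvr_pow_maximalIdeal_injective (h1.symm.trans h2)
    · rw [(hdet f' hf'max hf'prod n hn).2 hIn, (hdet f hfmax hfprod n hn).2 hIn]
  · have h1 : f' n = 0 := by
      by_contra h
      exact hn (hf'max n (Finsupp.mem_support_iff.mpr h))
    have h2 : f n = 0 := by
      by_contra h
      exact hn (hfmax n (Finsupp.mem_support_iff.mpr h))
    rw [h1, h2]
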